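/- Let k > m ≥ 1 be integers, α ∈ (0,1), and q ≥ √(2/(α(1-α))). Then 4α(1-α)·[∏_{i=1}^{m-1} (1+√(1-q^{-2(k-i)}))/2]² · q^{-2(k-m)} + ∏_{i=1}^{m-1}(1 - q^{-2(k-i)}) ≥ 1. -/
import Mathlib

private lemma weier_geom (k : ℕ) (q : ℝ) (hq1 : 1 ≤ q) (hq : 2 ≤ q ^ 2) :
    ∀ m : ℕ, 1 ≤ m → m < k →
      1 - (q ^ (2 * (k - m)))⁻¹ / (q ^ 2 - 1) ≤
        ∏ i ∈ Finset.Icc 1 (m - 1), (1 - (q ^ (2 * (k - i)))⁻¹) := by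
  have hq0 : (0:ℝ) < q := by linarith
  have hD : (0:ℝ) < q ^ 2 - 1 := by linarith
  intro m
  induction m with
  | zero => intro h; omega
  | succ n ih =>
    intro _ hlt
    rcases Nat.eq_zero_or_pos n with hn | hn
    · subst hn
      simp only [Nat.add_sub_cancel]
      rw [show Finset.Icc 1 0 = ∅ by rfl, Finset.prod_empty]
      have ht : (0:ℝ) ≤ (q ^ (2 * (k - 1)))⁻¹ := by positivity
      have := div_nonneg ht hD.le
      linarith
    · obtain ⟨p, rfl⟩ : ∃ p, n = p + 1 := ⟨n - 1, by omega⟩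
      have hnk : p + 1 < k := by omega
      have ih' := ih (by omega) hnk
      simp only [Nat.add_sub_cancel] at ih' ⊢
      rw [Finset.prod_Icc_succ_top (by omega : 1 ≤ p + 1)]
      set t : ℝ := (q ^ (2 * (k - (p + 1))))⁻¹ with htdef
      have ht0 : 0 < t := by positivity
      have ht1 : t ≤ 1 := by
        rw [htdef]
        have : (1:ℝ) ≤ q ^ (2 * (k - (p + 1))) := one_le_pow₀ hq1
        exact inv_le_one_of_one_le₀ this
      have hpow : q ^ (2 * (k - (p + 1 + 1))) * q ^ 2 = q ^ (2 * (k - (p + 1))) := by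
        rw [← pow_add]
        congr 1
        omega
      have hnew : (q ^ (2 * (k - (p + 1 + 1))))⁻¹ = t * q ^ 2 := by
        rw [htdef, ← hpow]
        rw [mul_inv, inv_mul_cancel_right₀ (by positivity)]
      rw [hnew]
      have hstep : (1 - t / (q ^ 2 - 1)) * (1 - t) - (1 - t * q ^ 2 / (q ^ 2 - 1))
          = t ^ 2 / (q ^ 2 - 1) := by
        field_simp
        ring
      have hmul : (1 - t / (q ^ 2 - 1)) * (1 - t) ≤
          (∏ i ∈ Finset.Icc 1 p, (1 - (q ^ (2 * (k - i)))⁻¹)) * (1 - t) :=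
        mul_le_mul_of_nonneg_right ih' (by linarith)
      have hpos : 0 ≤ t ^ 2 / (q ^ 2 - 1) := by positivity
      linarith

set_option maxHeartbeats 1000000 in
theorem geometric_sharpness_inequality (k m : ℕ) (α q : ℝ)
    (hm : 1 ≤ m) (hkm : m < k) (hα : 0 < α ∧ α < 1)
    (hq : q ≥ Real.sqrt (2 / (α * (1 - α)))) :
    4 * α * (1 - α) *
        (∏ i ∈ Finset.Icc 1 (m - 1), (1 + Real.sqrt (1 - (q ^ (2 * (k - i)))⁻¹)) / 2) ^ 2 *
        (q ^ (2 * (k - m)))⁻¹ +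
      ∏ i ∈ Finset.Icc 1 (m - 1), (1 - (q ^ (2 * (k - i)))⁻¹) ≥ 1 := by
  obtain ⟨hα0, hα1⟩ := hα
  have hαβ : 0 < α * (1 - α) := mul_pos hα0 (by linarith)
  have hX : (0:ℝ) < 2 / (α * (1 - α)) := by positivity
  have hq0 : 0 < q := lt_of_lt_of_le (Real.sqrt_pos.mpr hX) hq
  have hq2X : 2 / (α * (1 - α)) ≤ q ^ 2 := by
    have h1 : Real.sqrt (2 / (α * (1 - α))) ^ 2 ≤ q ^ 2 :=
      pow_le_pow_left₀ (Real.sqrt_nonneg _) hq 2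
    rwa [Real.sq_sqrt hX.le] at h1
  have h2 : 2 ≤ α * (1 - α) * q ^ 2 := by
    rw [div_le_iff₀ hαβ] at hq2X
    nlinarith
  have hc : 8 ≤ 4 * α * (1 - α) * q ^ 2 := by nlinarith
  have h8 : (8:ℝ) ≤ q ^ 2 := by nlinarith [sq_nonneg (2 * α - 1), sq_nonneg q]
  have hq1 : 1 ≤ q := by nlinarith
  have hD : (0:ℝ) < q ^ 2 - 1 := by linarith
  -- bounds on each x_i
  have hx : ∀ i : ℕ, 0 ≤ (q ^ (2 * (k - i)))⁻¹ ∧ (q ^ (2 * (k - i)))⁻¹ ≤ 1 := by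
    intro i
    constructor
    · positivity
    · exact inv_le_one_of_one_le₀ (one_le_pow₀ hq1)
  -- Q ≤ P ^ 2
  have hPQ : ∏ i ∈ Finset.Icc 1 (m - 1), (1 - (q ^ (2 * (k - i)))⁻¹) ≤
      (∏ i ∈ Finset.Icc 1 (m - 1), (1 + Real.sqrt (1 - (q ^ (2 * (k - i)))⁻¹)) / 2) ^ 2 := by
    rw [← Finset.prod_pow]
    apply Finset.prod_le_prod
    · intro i _
      have := hx i
      linarith [this.1, this.2]
    · intro i _
      obtain ⟨hx0, hx1⟩ := hx i
      set x : ℝ := (q ^ (2 * (k - i)))⁻¹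
      have h1x : 0 ≤ 1 - x := by linarith
      have hs := Real.sq_sqrt h1x
      have hs0 := Real.sqrt_nonneg (1 - x)
      have hs1 : Real.sqrt (1 - x) ≤ 1 := Real.sqrt_le_one.mpr (by linarith)
      nlinarith [hs, hs0, hs1]
  -- Q ≥ 1 - t / D
  have hQlb := weier_geom k q hq1 (by linarith) m hm hkm
  set P : ℝ := ∏ i ∈ Finset.Icc 1 (m - 1), (1 + Real.sqrt (1 - (q ^ (2 * (k - i)))⁻¹)) / 2
  set Q : ℝ := ∏ i ∈ Finset.Icc 1 (m - 1), (1 - (q ^ (2 * (k - i)))⁻¹)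
  set t : ℝ := (q ^ (2 * (k - m)))⁻¹ with htdef
  have ht0 : 0 < t := by positivity
  have ht1 : t ≤ 1 := (hx m).2
  set c : ℝ := 4 * α * (1 - α) with hcdef
  have hc0 : 0 < c := by rw [hcdef]; nlinarith
  -- key: c * (q^2 - 1 - t) ≥ 1
  have hkey : 1 ≤ c * (q ^ 2 - 1 - t) := by
    have h1 : 8 * (q ^ 2 - 1 - t) ≤ c * q ^ 2 * (q ^ 2 - 1 - t) := by
      apply mul_le_mul_of_nonneg_right _ (by linarith)
      linarith
    nlinarith [h1, sq_nonneg q]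
  have h3 : 1 ≤ (1 - t / (q ^ 2 - 1)) * (1 + c * t) := by
    have hexp : (1 - t / (q ^ 2 - 1)) * (1 + c * t) - 1
        = t * (c * (q ^ 2 - 1 - t) - 1) / (q ^ 2 - 1) := by
      field_simp
      ring
    have : 0 ≤ t * (c * (q ^ 2 - 1 - t) - 1) / (q ^ 2 - 1) := by
      apply div_nonneg _ hD.le
      exact mul_nonneg ht0.le (by linarith)
    linarith
  -- combine
  have hstep1 : c * Q * t ≤ c * P ^ 2 * t := by
    apply mul_le_mul_of_nonneg_right _ ht0.le
    exact mul_le_mul_of_nonneg_left hPQ hc0.le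
  have hstep2 : (1 - t / (q ^ 2 - 1)) * (1 + c * t) ≤ Q * (1 + c * t) := by
    apply mul_le_mul_of_nonneg_right hQlb
    nlinarith
  have : 4 * α * (1 - α) * P ^ 2 * t + Q = c * P ^ 2 * t + Q := by rw [hcdef]
  nlinarith [hstep1, hstep2, h3]
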